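/- arXiv:2405.08358 — 2 statements merged into one kernel-verified Lean document; each statement's English description precedes it below -/
import Mathlib

section
/- Assume every x ∈ T has at least two successors and that there exist c₁, c₂ > 1 with c₂ m_ν(y) ≤ m_ν(x) ≤ c₁ m_ν(y) for all x ∈ T and y ∈ s(x). Let b ∈ BMO and let K : T × ∂T → ℝ satisfy (A1), (A2) with constant C_K, and (A3) with exponent α > 0. Then there exists a constant C, depending only on c₁, c₂, C_K and α, such that Σ_{x ∈ T_v} |𝒦b(x)| m_ν(x) ≤ C ‖b‖_{BMO} m_ν(v) for every v ∈ T; in particular σ = |𝒦b| m_ν is a Carleson measure. -/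
open MeasureTheory
open scoped ENNReal NNReal

/-- The punctured boundary `∂T` of the tree: maps `ω : ℤ → T` with `lev (ω j) = j`
and `par (ω j) = ω (j+1)`. -/
def PBoundary {T : Type*} (par : T → T) (lev : T → ℤ) : Type _ :=
  {ω : ℤ → T // (∀ j : ℤ, lev (ω j) = j) ∧ ∀ j : ℤ, par (ω j) = ω (j + 1)}

/-- The boundary sector `∂T_x`. -/
def sector {T : Type*} (par : T → T) (lev : T → ℤ) (x : T) : Set (PBoundary par lev) :=
  {ω : PBoundary par lev | ω.1 (lev x) = x}

/-- The σ-algebra on `∂T` generated by the sectors. -/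
instance {T : Type*} (par : T → T) (lev : T → ℤ) : MeasurableSpace (PBoundary par lev) :=
  MeasurableSpace.generateFrom (Set.range (sector par lev))

/-- The flow measure `m_ν x = ν (∂T_x)` (as a real number). -/
noncomputable def mnu {T : Type*} (par : T → T) (lev : T → ℤ)
    (ν : Measure (PBoundary par lev)) (x : T) : ℝ :=
  (ν (sector par lev x)).toReal

/-- The sector `T_x = {y ∈ T : y lies below x}`. -/
def tsector {T : Type*} (par : T → T) (x : T) : Set T :=
  {y : T | ∃ n : ℕ, par^[n] y = x}

universe u

set_option maxHeartbeats 1000000 in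
/-- Assume every vertex has at least two successors and
`c₂ m_ν(y) ≤ m_ν(x) ≤ c₁ m_ν(y)` for `y ∈ s(x)`. If `b ∈ BMO` (with BMO bound `B`) and
`K` satisfies (A1), (A2) with constant `C_K` and (A3) with exponent `α > 0`, then there is
a constant `C` depending only on `c₁, c₂, C_K, α` with
`Σ_{x ∈ T_v} |𝒦b(x)| m_ν(x) ≤ C ‖b‖_{BMO} m_ν(v)` for every `v ∈ T`; in particular
`σ = |𝒦b| m_ν` is a Carleson measure. -/
theorem stmt18 (c₁ c₂ CK α : ℝ) (hc₁ : 1 < c₁) (hc₂ : 1 < c₂) (hCK : 0 ≤ CK)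
    (hα : 0 < α) :
    ∃ C : ℝ, 0 < C ∧
      ∀ (T : Type u) (par : T → T) (lev : T → ℤ),
        Nonempty T →
        (∀ x : T, lev (par x) = lev x + 1) →
        (∀ x : T, {y : T | par y = x}.Finite) →
        (∀ x : T, ∃ y z : T, y ≠ z ∧ par y = x ∧ par z = x) →
        (∀ x y : T, ∃ n m : ℕ, par^[n] x = par^[m] y) →
        ∀ ν : Measure (PBoundary par lev),
          (∀ x : T, 0 < ν (sector par lev x) ∧ ν (sector par lev x) < ⊤) →
          -- local doubling: `c₂ m_ν(y) ≤ m_ν(x) ≤ c₁ m_ν(y)` for every successor `y` of `x`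
          (∀ x y : T, par y = x →
            c₂ * mnu par lev ν y ≤ mnu par lev ν x ∧
              mnu par lev ν x ≤ c₁ * mnu par lev ν y) →
          -- `conf x ω` is the confluent `x ∧ ω`
          ∀ conf : T → PBoundary par lev → T,
            (∀ (x : T) (ω : PBoundary par lev), ∃ n : ℕ,
              conf x ω = par^[n] x ∧ ω.1 (lev x + n) = par^[n] x ∧
                ∀ m : ℕ, ω.1 (lev x + m) = par^[m] x → n ≤ m) →
            -- `b` is locally integrable with BMO bound `B`
            ∀ b : PBoundary par lev → ℝ,
              (∀ x : T, IntegrableOn b (sector par lev x) ν) →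
              ∀ B : ℝ, 0 ≤ B →
                (∀ x : T,
                  ∫ ω in sector par lev x,
                      |b ω - (mnu par lev ν x)⁻¹ * ∫ ξ in sector par lev x, b ξ ∂ν| ∂ν
                    ≤ B * mnu par lev ν x) →
                -- the kernel `K` satisfies (A1), (A2), (A3)
                ∀ K : T → PBoundary par lev → ℝ,
                  (∀ x : T, Integrable (K x) ν ∧ ∫ ω, K x ω ∂ν = 0) →
                  (∀ᵐ ω ∂ν, ∑' x : T, ENNReal.ofReal (|K x ω| * mnu par lev ν x)
                    ≤ ENNReal.ofReal CK) →
                  (∀ (x : T) (ω : PBoundary par lev),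
                    |K x ω| ≤ mnu par lev ν x ^ α / mnu par lev ν (conf x ω) ^ (α + 1)) →
                  ∀ v : T,
                    ∑' x : tsector par v,
                        ENNReal.ofReal (|∫ ω, K x.1 ω * b ω ∂ν| * mnu par lev ν x.1)
                      ≤ ENNReal.ofReal (C * B * mnu par lev ν v) := by
  classical
  -- the geometric ratio
  set q : ℝ := (c₂ ^ α)⁻¹ with hq_def
  have hc₂0 : (0:ℝ) < c₂ := lt_trans one_pos hc₂
  have hc₂α : 1 < c₂ ^ α := by
    rw [Real.one_lt_rpow_iff_of_pos hc₂0]; exact Or.inl ⟨hc₂, hα⟩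
  have hq0 : 0 < q := inv_pos.2 (lt_trans one_pos hc₂α)
  have hq1 : q < 1 := by
    rw [hq_def, inv_lt_one_iff₀]; exact Or.inr hc₂α
  -- the series
  have hgsum : Summable (fun n : ℕ => (1 + c₁ * (n + 1)) * q ^ (n + 1)) := by
    have h1 : Summable (fun n : ℕ => (1 + c₁ * n) * q ^ n) := by
      have hs1 : Summable (fun n : ℕ => q ^ n) :=
        summable_geometric_of_lt_one hq0.le hq1
      have hs2 : Summable (fun n : ℕ => (n : ℝ) * q ^ n) := by
        have := summable_pow_mul_geometric_of_norm_lt_one 1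
          (r := q) (by rw [Real.norm_eq_abs, abs_of_pos hq0]; exact hq1)
        simpa using this
      have := hs1.add (hs2.mul_left c₁)
      refine this.congr fun n => by ring
    exact ((summable_nat_add_iff 1).2 h1).congr (fun n => by push_cast; ring)
  have hgnn : ∀ n : ℕ, 0 ≤ (1 + c₁ * (n + 1)) * q ^ (n + 1) := by
    intro n
    have : (0:ℝ) ≤ 1 + c₁ * (n+1) := by positivity
    positivity
  set S₁ : ℝ := ∑' n : ℕ, (1 + c₁ * (n + 1)) * q ^ (n + 1) with hS₁_def
  have hS₁nn : 0 ≤ S₁ := tsum_nonneg hgnn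
  set S₂ : ℝ := (1 - q)⁻¹ with hS₂_def
  have hS₂pos : 0 < S₂ := inv_pos.2 (by linarith)
  refine ⟨CK + S₁ * S₂ + 1, by positivity, ?_⟩
  intro T par lev _hne hlev hsfin _hsucc2 _hanc ν hν hflow conf hconf b hbint B hB hBMO
    K hA1 hA2 hA3 v
  set m : T → ℝ := mnu par lev ν with hm_def
  set Se : T → Set (PBoundary par lev) := sector par lev with hSe_def
  have hmpos : ∀ x, 0 < m x := fun x => ENNReal.toReal_pos (hν x).1.ne' (hν x).2.ne
  have hmeasS : ∀ x, MeasurableSet (Se x) := fun x =>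
    MeasurableSpace.measurableSet_generateFrom ⟨x, rfl⟩
  have hνfin : ∀ x, ν (Se x) ≠ ⊤ := fun x => (hν x).2.ne
  have hofm : ∀ x, ENNReal.ofReal (m x) = ν (Se x) := fun x => ENNReal.ofReal_toReal (hνfin x)
  have hlevi : ∀ (x : T) (n : ℕ), lev (par^[n] x) = lev x + n := by
    intro x n
    induction n with
    | zero => simp
    | succ n ih => rw [Function.iterate_succ_apply', hlev, ih]; push_cast; ring
  have homega : ∀ (ω : PBoundary par lev) (j : ℤ) (n : ℕ), ω.1 (j + n) = par^[n] (ω.1 j) := by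
    intro ω j n
    induction n with
    | zero => simp
    | succ n ih =>
      rw [Function.iterate_succ_apply']
      have h : (j + (n+1:ℕ) : ℤ) = (j + n) + 1 := by push_cast; ring
      rw [h, ← ω.2.2, ih]
  have hstep : ∀ y : T, Se y ⊆ Se (par y) := by
    intro y ω hω
    have h1 : ω.1 (lev y) = y := hω
    show ω.1 (lev (par y)) = par y
    rw [hlev y, ← ω.2.2, h1]
  have hsub : ∀ (y : T) (n : ℕ), Se y ⊆ Se (par^[n] y) := by
    intro y n
    induction n with
    | zero => intro ω h; simpa using h
    | succ n ih => rw [Function.iterate_succ_apply']; exact fun ω h => hstep _ (ih h)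
  have hsuble : ∀ (y : T) {k l : ℕ}, k ≤ l → Se (par^[k] y) ⊆ Se (par^[l] y) := by
    intro y k l hkl
    have h1 : par^[l - k] (par^[k] y) = par^[l] y := by
      rw [← Function.iterate_add_apply, Nat.sub_add_cancel hkl]
    have h2 := hsub (par^[k] y) (l - k)
    rwa [h1] at h2
  have hdisj : ∀ x y : T, lev x = lev y → x ≠ y → Disjoint (Se x) (Se y) := by
    intro x y hl hxy
    rw [Set.disjoint_left]
    intro ω hx hy
    exact hxy (by rw [← show ω.1 (lev x) = x from hx, hl]; exact hy)
  have hgrow : ∀ (x : T) (n : ℕ), c₂ ^ n * m x ≤ m (par^[n] x) := by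
    intro x n
    induction n with
    | zero => simp
    | succ n ih =>
      rw [Function.iterate_succ_apply']
      have h1 := (hflow (par (par^[n] x)) (par^[n] x) rfl).1
      calc c₂ ^ (n+1) * m x = c₂ * (c₂ ^ n * m x) := by ring
        _ ≤ c₂ * m (par^[n] x) := mul_le_mul_of_nonneg_left ih hc₂0.le
        _ ≤ m (par (par^[n] x)) := h1
  have hmono : ∀ (x : T) (n : ℕ), m x ≤ m (par^[n] x) := by
    intro x n
    have h1 : (1:ℝ) ≤ c₂ ^ n := one_le_pow₀ hc₂.le
    nlinarith [hgrow x n, hmpos x]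
  have hpow_pow : ∀ n : ℕ, ((c₂ ^ n : ℝ)) ^ α = (c₂ ^ α) ^ n := by
    intro n
    rw [← Real.rpow_natCast c₂ n, ← Real.rpow_mul hc₂0.le, mul_comm,
      Real.rpow_mul hc₂0.le, Real.rpow_natCast]
  have hKglob : ∀ (x : T) (ω : PBoundary par lev), |K x ω| ≤ (m x)⁻¹ := by
    intro x ω
    obtain ⟨k, hk, -, -⟩ := hconf x ω
    have h1 : m x ≤ m (conf x ω) := by rw [hk]; exact hmono x k
    have h2 : m x ^ (α+1) ≤ m (conf x ω) ^ (α+1) :=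
      Real.rpow_le_rpow (hmpos x).le h1 (by linarith)
    have h3 : |K x ω| ≤ m x ^ α / m x ^ (α+1) :=
      le_trans (hA3 x ω) (div_le_div_of_nonneg_left
        (Real.rpow_nonneg (hmpos x).le α) (Real.rpow_pos_of_pos (hmpos x) _) h2)
    calc |K x ω| ≤ m x ^ α / m x ^ (α+1) := h3
      _ = (m x)⁻¹ := by
          rw [← Real.rpow_sub (hmpos x)]
          have h4 : α - (α+1) = -1 := by ring
          rw [h4, Real.rpow_neg_one]
  -- depth sets
  set D : ℕ → Set T := fun d => {y : T | par^[d] y = v} with hD_def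
  have hDfin : ∀ d, (D d).Finite := by
    intro d
    induction d with
    | zero => exact (Set.finite_singleton v).subset (fun y hy => hy)
    | succ d ih =>
      have h1 : D (d+1) = ⋃ y ∈ D d, {z : T | par z = y} := by
        ext z
        simp only [hD_def, Set.mem_setOf_eq, Set.mem_iUnion]
        constructor
        · intro h; exact ⟨par z, by rwa [← Function.iterate_succ_apply], rfl⟩
        · rintro ⟨y, hy, rfl⟩; rwa [Function.iterate_succ_apply]
      rw [h1]
      exact Set.Finite.biUnion ih (fun y _ => hsfin y)
  have htsec : tsector par v = ⋃ d, D d := by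
    ext y; simp [tsector, hD_def]
  have htscnt : (tsector par v).Countable := by
    rw [htsec]; exact Set.countable_iUnion (fun d => (hDfin d).countable)
  have hlevD : ∀ d (y : T), y ∈ D d → lev y = lev v - d := by
    intro d y hy
    have := hlevi y d
    rw [show par^[d] y = v from hy] at this
    omega
  have hflowsum : ∀ d, (∑' y : ↥(D d), ν (Se y.1)) ≤ ν (Se v) := by
    intro d
    have hcnt : Countable ↥(D d) := (hDfin d).countable.to_subtype
    have hdis : Pairwise (Function.onFun Disjoint fun y : ↥(D d) => Se y.1) := by
      intro y z hyz
      exact hdisj _ _ (by rw [hlevD d y.1 y.2, hlevD d z.1 z.2])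
        (fun h => hyz (Subtype.ext h))
    rw [← measure_iUnion hdis (fun y => hmeasS y.1)]
    refine measure_mono (Set.iUnion_subset fun y => ?_)
    have h1 := hsub y.1 d
    rwa [show par^[d] y.1 = v from y.2] at h1
  -- coverage of the boundary by sectors of ancestors of v
  have hcover : ∀ ω : PBoundary par lev, ∃ n : ℕ, ω ∈ Se (par^[n] v) := by
    intro ω
    obtain ⟨n, -, hn, -⟩ := hconf v ω
    exact ⟨n, show ω.1 (lev (par^[n] v)) = par^[n] v by rw [hlevi v n]; exact hn⟩
  -- the annuli F n
  set F : ℕ → Set (PBoundary par lev) :=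
    fun n => Se (par^[n+1] v) \ Se (par^[n] v) with hF_def
  have hFmeas : ∀ n, MeasurableSet (F n) :=
    fun n => (hmeasS _).diff (hmeasS _)
  have hFdisj : Pairwise (Function.onFun Disjoint F) := by
    intro i j hij
    simp only [Function.onFun]
    rcases lt_or_gt_of_ne hij with h | h
    · rw [Set.disjoint_left]
      rintro ω ⟨hi1, -⟩ ⟨-, hj2⟩
      exact hj2 (hsuble v (by omega : i + 1 ≤ j) hi1)
    · rw [Set.disjoint_left]
      rintro ω ⟨-, hi2⟩ ⟨hj1, -⟩
      exact hi2 (hsuble v (by omega : j + 1 ≤ i) hj1)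
  have hFunion : (Se v)ᶜ = ⋃ n, F n := by
    ext ω
    simp only [Set.mem_compl_iff, Set.mem_iUnion]
    constructor
    · intro hω
      have hex : ∃ n, ω ∈ Se (par^[n] v) := hcover ω
      have hn0 : ¬ ω ∈ Se (par^[0] v) := by simpa using hω
      set n₀ := Nat.find hex with hn₀
      have hmem : ω ∈ Se (par^[n₀] v) := Nat.find_spec hex
      have hpos : 0 < n₀ := by
        rcases Nat.eq_zero_or_pos n₀ with h | h
        · exact absurd (h ▸ hmem) hn0
        · exact h
      refine ⟨n₀ - 1, ?_, ?_⟩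
      · rwa [show n₀ - 1 + 1 = n₀ by omega]
      · exact Nat.find_min hex (by omega)
    · rintro ⟨n, hn1, hn2⟩ hω
      exact hn2 (hsuble v (Nat.zero_le n) (by simpa using hω))
  -- identification of the confluent on the annuli
  have hconfF : ∀ (x : T) (d : ℕ), par^[d] x = v → ∀ (n : ℕ) (ω : PBoundary par lev),
      ω ∈ F n → conf x ω = par^[n+1] v := by
    intro x d hd n ω hω
    obtain ⟨k, hck, hk, hmin⟩ := hconf x ω
    have hlevv : lev v = lev x + d := by rw [← hd, hlevi]
    have hxv : par^[d + (n+1)] x = par^[n+1] v := by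
      rw [add_comm d (n+1), Function.iterate_add_apply, hd]
    have hmem1 : ω.1 (lev (par^[n+1] v)) = par^[n+1] v := hω.1
    have hmem : ω.1 (lev x + (d + (n+1) : ℕ)) = par^[d + (n+1)] x := by
      rw [hxv]
      have h5 : (lev x + (d + (n+1) : ℕ) : ℤ) = lev (par^[n+1] v) := by
        rw [hlevi v (n+1), hlevv]; push_cast; ring
      rw [h5, hmem1]
    have hkle : k ≤ d + (n + 1) := hmin _ hmem
    have hknot : ¬ k < d + (n + 1) := by
      intro hlt
      rcases le_or_gt d k with hdk | hkd
      · -- k ≥ d : ω would be in a smaller sector around v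
        have h1 : par^[k] x = par^[k - d] v := by
          rw [← hd, ← Function.iterate_add_apply, Nat.sub_add_cancel hdk]
        have h2 : ω ∈ Se (par^[k - d] v) := by
          show ω.1 (lev (par^[k-d] v)) = par^[k-d] v
          rw [hlevi v (k-d), hlevv, ← h1]
          have h3 : (lev x + d + (k - d : ℕ) : ℤ) = lev x + (k:ℕ) := by
            push_cast; omega
          rw [h3]; exact hk
        exact hω.2 (hsuble v (by omega : k - d ≤ n) h2)
      · -- k < d : ω would be in the sector of v itself
        have h1 : ω.1 (lev x + k + (d - k : ℕ)) = par^[d - k] (ω.1 (lev x + k)) :=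
          homega ω _ _
        have h2 : ω ∈ Se v := by
          show ω.1 (lev v) = v
          rw [hlevv, show (lev x + d : ℤ) = lev x + k + ((d - k : ℕ) : ℤ) by push_cast; omega]
          rw [h1, hk, ← Function.iterate_add_apply, Nat.sub_add_cancel hkd.le, hd]
        exact hω.2 (hsuble v (Nat.zero_le n) h2)
    have hkeq : k = d + (n + 1) := by omega
    rw [hck, hkeq, hxv]
  -- integrability of constants and differences on sectors
  have hconst_int : ∀ (x : T) (r : ℝ), IntegrableOn (fun _ => r) (Se x) ν :=
    fun x r => integrableOn_const (hνfin x)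
  have hsubint : ∀ (x : T) (r : ℝ), IntegrableOn (fun ω => b ω - r) (Se x) ν :=
    fun x r => (hbint x).sub (hconst_int x r)
  have habsint : ∀ (x : T) (r : ℝ), IntegrableOn (fun ω => |b ω - r|) (Se x) ν :=
    fun x r => (hsubint x r).abs
  -- the averages along the ancestors of v
  set a : ℕ → ℝ := fun j => (m (par^[j] v))⁻¹ * ∫ ω in Se (par^[j] v), b ω ∂ν with ha_def
  have hstepj : ∀ j : ℕ, |a (j+1) - a j| ≤ c₁ * B := by
    intro j
    set w := par^[j] v with hw_def
    have hw' : par^[j+1] v = par w := Function.iterate_succ_apply' par j v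
    have h0 : 0 < m w := hmpos w
    have e1 : ∫ ω in Se w, (b ω - a (j+1)) ∂ν
        = (∫ ω in Se w, b ω ∂ν) - m w * a (j+1) := by
      rw [integral_sub (hbint w) (hconst_int w _), setIntegral_const, smul_eq_mul]
      rfl
    have e3 : a j - a (j+1) = (m w)⁻¹ * ∫ ω in Se w, (b ω - a (j+1)) ∂ν := by
      rw [e1]
      have e2 : a j = (m w)⁻¹ * ∫ ω in Se w, b ω ∂ν := rfl
      rw [e2]; field_simp
    have h4 : |∫ ω in Se w, (b ω - a (j+1)) ∂ν| ≤ ∫ ω in Se w, |b ω - a (j+1)| ∂ν := by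
      have h5 := norm_integral_le_integral_norm (μ := ν.restrict (Se w))
        (f := fun ω => b ω - a (j+1))
      simpa [Real.norm_eq_abs] using h5
    have key : |a j - a (j+1)| ≤ (m w)⁻¹ * ∫ ω in Se w, |b ω - a (j+1)| ∂ν := by
      rw [e3, abs_mul, abs_of_pos (inv_pos.2 h0)]
      exact mul_le_mul_of_nonneg_left h4 (inv_pos.2 h0).le
    have hBMO1 : ∫ ω in Se (par^[j+1] v), |b ω - a (j+1)| ∂ν ≤ B * m (par^[j+1] v) :=
      hBMO (par^[j+1] v)
    have hmon : ∫ ω in Se w, |b ω - a (j+1)| ∂ν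
        ≤ ∫ ω in Se (par^[j+1] v), |b ω - a (j+1)| ∂ν := by
      refine setIntegral_mono_set (habsint _ _)
        (Filter.Eventually.of_forall fun ω => abs_nonneg _) ?_
      rw [hw']
      exact (hstep w).eventuallyLE
    have hflow1 : m (par^[j+1] v) ≤ c₁ * m w := by
      rw [hw']; exact (hflow (par w) w rfl).2
    calc |a (j+1) - a j| = |a j - a (j+1)| := abs_sub_comm _ _
      _ ≤ (m w)⁻¹ * ∫ ω in Se w, |b ω - a (j+1)| ∂ν := key
      _ ≤ (m w)⁻¹ * (B * (c₁ * m w)) := by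
          have h6 : ∫ ω in Se w, |b ω - a (j+1)| ∂ν ≤ B * (c₁ * m w) := by
            exact le_trans hmon (le_trans hBMO1 (mul_le_mul_of_nonneg_left hflow1 hB))
          exact mul_le_mul_of_nonneg_left h6 (inv_pos.2 h0).le
      _ = c₁ * B := by field_simp
  have hchain : ∀ n : ℕ, |a n - a 0| ≤ n * (c₁ * B) := by
    intro n
    induction n with
    | zero => simp
    | succ n ih =>
      calc |a (n+1) - a 0| ≤ |a (n+1) - a n| + |a n - a 0| := by
            have : a (n+1) - a 0 = (a (n+1) - a n) + (a n - a 0) := by ring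
            rw [this]; exact abs_add_le _ _
        _ ≤ c₁ * B + n * (c₁ * B) := add_le_add (hstepj n) ih
        _ = (n+1 : ℕ) * (c₁ * B) := by push_cast; ring
  have hosc : ∀ n : ℕ, ∫ ω in Se (par^[n] v), |b ω - a 0| ∂ν
      ≤ B * (1 + c₁ * n) * m (par^[n] v) := by
    intro n
    have h1 : ∀ ω, |b ω - a 0| ≤ |b ω - a n| + |a n - a 0| := by
      intro ω
      calc |b ω - a 0| = |(b ω - a n) + (a n - a 0)| := by ring_nf
        _ ≤ |b ω - a n| + |a n - a 0| := abs_add_le _ _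
    have hint2 : IntegrableOn (fun ω => |b ω - a n| + |a n - a 0|) (Se (par^[n] v)) ν :=
      (habsint (par^[n] v) (a n)).add (hconst_int (par^[n] v) |a n - a 0|)
    have h2 := integral_mono (μ := ν.restrict (Se (par^[n] v))) (habsint _ (a 0)) hint2 h1
    rw [integral_add (habsint (par^[n] v) (a n)) (hconst_int (par^[n] v) |a n - a 0|),
      setIntegral_const, smul_eq_mul] at h2
    have h3 : ∫ ω in Se (par^[n] v), |b ω - a n| ∂ν ≤ B * m (par^[n] v) := hBMO (par^[n] v)
    have h4 := hchain n
    have h5 : 0 < m (par^[n] v) := hmpos (par^[n] v)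
    have h6 : ν.real (Se (par^[n] v)) = m (par^[n] v) := rfl
    rw [h6] at h2
    nlinarith [mul_le_mul_of_nonneg_left h4 h5.le]
  have hoscL : ∀ n : ℕ, ∫⁻ ω in Se (par^[n] v), ENNReal.ofReal |b ω - a 0| ∂ν
      ≤ ENNReal.ofReal (B * (1 + c₁ * n) * m (par^[n] v)) := by
    intro n
    rw [← ofReal_integral_eq_lintegral_ofReal (habsint _ _)
      (Filter.Eventually.of_forall fun ω => abs_nonneg _)]
    exact ENNReal.ofReal_le_ofReal (hosc n)
  have hbm : AEStronglyMeasurable b ν := by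
    have h1 : (⋃ n, Se (par^[n] v)) = Set.univ :=
      Set.eq_univ_of_forall fun ω => Set.mem_iUnion.2 (hcover ω)
    have h2 : AEStronglyMeasurable b (ν.restrict (⋃ n, Se (par^[n] v))) :=
      AEStronglyMeasurable.iUnion (fun n => (hbint (par^[n] v)).aestronglyMeasurable)
    rwa [h1, Measure.restrict_univ] at h2
  -- the product kernel-oscillation integrand
  set Ψ : T → PBoundary par lev → ℝ≥0∞ :=
    fun x ω => ENNReal.ofReal |K x ω| * ENNReal.ofReal |b ω - a 0| with hΨ_def
  -- finiteness of the local part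
  have hosc0 : ∫⁻ ω in Se v, ENNReal.ofReal |b ω - a 0| ∂ν ≤ ENNReal.ofReal (B * m v) := by
    have h := hoscL 0
    simpa using h
  have hI1fin : ∀ x : T, ∫⁻ ω in Se v, Ψ x ω ∂ν < ⊤ := by
    intro x
    have h1 : ∀ ω, Ψ x ω ≤ ENNReal.ofReal (m x)⁻¹ * ENNReal.ofReal |b ω - a 0| :=
      fun ω => mul_le_mul_left (ENNReal.ofReal_le_ofReal (hKglob x ω)) _
    calc ∫⁻ ω in Se v, Ψ x ω ∂ν
        ≤ ∫⁻ ω in Se v, ENNReal.ofReal (m x)⁻¹ * ENNReal.ofReal |b ω - a 0| ∂ν :=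
          lintegral_mono h1
      _ = ENNReal.ofReal (m x)⁻¹ * ∫⁻ ω in Se v, ENNReal.ofReal |b ω - a 0| ∂ν :=
          lintegral_const_mul' _ _ ENNReal.ofReal_ne_top
      _ ≤ ENNReal.ofReal (m x)⁻¹ * ENNReal.ofReal (B * m v) := mul_le_mul_right hosc0 _
      _ < ⊤ := ENNReal.mul_lt_top ENNReal.ofReal_lt_top ENNReal.ofReal_lt_top
  -- the global part
  have hI2 : ∀ (x : T) (d : ℕ), par^[d] x = v →
      ∫⁻ ω in (Se v)ᶜ, Ψ x ω ∂ν
        ≤ ENNReal.ofReal (B * (m x ^ α * ((m v) ^ α)⁻¹) * S₁) := by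
    intro x d hd
    rw [hFunion, lintegral_iUnion hFmeas hFdisj]
    set R : ℝ := m x ^ α * ((m v) ^ α)⁻¹ with hR_def
    have hRnn : 0 ≤ R := by
      rw [hR_def]
      exact mul_nonneg (Real.rpow_nonneg (hmpos x).le α)
        (inv_nonneg.2 (Real.rpow_nonneg (hmpos v).le α))
    have hn : ∀ n : ℕ, ∫⁻ ω in F n, Ψ x ω ∂ν
        ≤ ENNReal.ofReal (B * R * ((1 + c₁ * ((n:ℝ) + 1)) * q ^ (n + 1))) := by
      intro n
      set M : ℝ := m (par^[n+1] v) with hM_def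
      have hMpos : 0 < M := hmpos _
      have h1 : ∫⁻ ω in F n, Ψ x ω ∂ν
          ≤ ∫⁻ ω in F n, ENNReal.ofReal (m x ^ α / M ^ (α+1)) * ENNReal.ofReal |b ω - a 0| ∂ν := by
        apply lintegral_mono_ae
        rw [ae_restrict_iff' (hFmeas n)]
        refine Filter.Eventually.of_forall fun ω hω => mul_le_mul_left ?_ _
        apply ENNReal.ofReal_le_ofReal
        have h2 := hA3 x ω
        rwa [hconfF x d hd n ω hω] at h2
      have hoscn1 : ∫⁻ ω in Se (par^[n+1] v), ENNReal.ofReal |b ω - a 0| ∂ν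
          ≤ ENNReal.ofReal (B * (1 + c₁ * ((n:ℝ)+1)) * M) := by
        have h := hoscL (n+1)
        push_cast at h
        exact h
      have h2 : ∫⁻ ω in F n, ENNReal.ofReal (m x ^ α / M ^ (α+1)) * ENNReal.ofReal |b ω - a 0| ∂ν
          ≤ ENNReal.ofReal (m x ^ α / M ^ (α+1)) * ENNReal.ofReal (B * (1 + c₁ * ((n:ℝ)+1)) * M) := by
        rw [lintegral_const_mul' _ _ ENNReal.ofReal_ne_top]
        refine mul_le_mul_right (le_trans (lintegral_mono_set fun ω hω => hω.1) hoscn1) _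
      refine le_trans h1 (le_trans h2 ?_)
      rw [← ENNReal.ofReal_mul (div_nonneg (Real.rpow_nonneg (hmpos x).le α)
        (Real.rpow_nonneg (hmpos _).le _))]
      apply ENNReal.ofReal_le_ofReal
      have e1 : m x ^ α / M ^ (α+1) * (B * (1 + c₁ * ((n:ℝ)+1)) * M)
          = B * (1 + c₁ * ((n:ℝ)+1)) * (m x ^ α / M ^ α) := by
        have hM0 : M ≠ 0 := hMpos.ne'
        have hMα : M ^ α ≠ 0 := (Real.rpow_pos_of_pos hMpos α).ne'
        rw [Real.rpow_add hMpos α 1, Real.rpow_one]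
        field_simp
      have e2 : m x ^ α / M ^ α ≤ R * q ^ (n+1) := by
        have hg := hgrow v (n+1)
        have h3 : (c₂ ^ (n+1) * m v) ^ α ≤ M ^ α :=
          Real.rpow_le_rpow (mul_nonneg (pow_nonneg hc₂0.le _) (hmpos v).le) hg hα.le
        rw [Real.mul_rpow (pow_nonneg hc₂0.le _) (hmpos v).le, hpow_pow] at h3
        have h4 : (0:ℝ) < (c₂ ^ α) ^ (n+1) * (m v) ^ α :=
          mul_pos (pow_pos (lt_trans one_pos hc₂α) _) (Real.rpow_pos_of_pos (hmpos v) α)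
        calc m x ^ α / M ^ α ≤ m x ^ α / ((c₂ ^ α) ^ (n+1) * (m v) ^ α) :=
              div_le_div_of_nonneg_left (Real.rpow_nonneg (hmpos x).le α) h4 h3
          _ = R * q ^ (n+1) := by
              rw [hR_def, hq_def, inv_pow, div_eq_mul_inv, mul_inv]
              ring
      rw [e1]
      calc B * (1 + c₁ * ((n:ℝ)+1)) * (m x ^ α / M ^ α)
          ≤ B * (1 + c₁ * ((n:ℝ)+1)) * (R * q ^ (n+1)) := by
            refine mul_le_mul_of_nonneg_left e2 ?_
            have h7 : (0:ℝ) ≤ 1 + c₁ * ((n:ℝ)+1) := by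
              have hn0 : (0:ℝ) ≤ (n:ℝ) := Nat.cast_nonneg n
              nlinarith
            exact mul_nonneg hB h7
        _ = B * R * ((1 + c₁ * ((n:ℝ) + 1)) * q ^ (n + 1)) := by ring
    calc ∑' n, ∫⁻ ω in F n, Ψ x ω ∂ν
        ≤ ∑' n : ℕ, ENNReal.ofReal (B * R * ((1 + c₁ * ((n:ℝ) + 1)) * q ^ (n + 1))) :=
          ENNReal.tsum_le_tsum hn
      _ = ENNReal.ofReal (∑' n : ℕ, B * R * ((1 + c₁ * ((n:ℝ) + 1)) * q ^ (n + 1))) := by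
          rw [ENNReal.ofReal_tsum_of_nonneg
            (fun n => mul_nonneg (mul_nonneg hB hRnn) (hgnn n))
            (hgsum.mul_left (B * R))]
      _ = ENNReal.ofReal (B * R * S₁) := by
          rw [tsum_mul_left]
  -- integrability of the truncated pairing
  have hIntKb : ∀ (x : T) (d : ℕ), par^[d] x = v →
      Integrable (fun ω => K x ω * (b ω - a 0)) ν := by
    intro x d hd
    refine ⟨(hA1 x).1.aestronglyMeasurable.mul (hbm.sub aestronglyMeasurable_const), ?_⟩
    rw [hasFiniteIntegral_iff_norm]
    have heq : ∀ ω, ENNReal.ofReal ‖K x ω * (b ω - a 0)‖ = Ψ x ω := by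
      intro ω
      rw [Real.norm_eq_abs, abs_mul, ENNReal.ofReal_mul (abs_nonneg _)]
    rw [lintegral_congr heq, ← lintegral_add_compl (fun ω => Ψ x ω) (hmeasS v)]
    exact ENNReal.add_lt_top.2 ⟨hI1fin x, lt_of_le_of_lt (hI2 x d hd) ENNReal.ofReal_lt_top⟩
  -- the key pointwise (in x) estimate
  have hKey : ∀ (x : T) (d : ℕ), par^[d] x = v →
      ENNReal.ofReal (|∫ ω, K x ω * b ω ∂ν| * m x)
        ≤ ENNReal.ofReal (m x) * (∫⁻ ω in Se v, Ψ x ω ∂ν)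
            + ENNReal.ofReal (B * S₁ * q ^ d * m x) := by
    intro x d hd
    have hInt := hIntKb x d hd
    have hsplit : ∫ ω, K x ω * b ω ∂ν = ∫ ω, K x ω * (b ω - a 0) ∂ν := by
      have e1 : ∀ ω, K x ω * b ω = K x ω * (b ω - a 0) + K x ω * a 0 := fun ω => by ring
      rw [integral_congr_ae (Filter.Eventually.of_forall e1),
        integral_add hInt ((hA1 x).1.mul_const (a 0)), integral_mul_const, (hA1 x).2,
        zero_mul, add_zero]
    have habs : ENNReal.ofReal |∫ ω, K x ω * (b ω - a 0) ∂ν| ≤ ∫⁻ ω, Ψ x ω ∂ν := by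
      have h1 : |∫ ω, K x ω * (b ω - a 0) ∂ν| ≤ ∫ ω, |K x ω * (b ω - a 0)| ∂ν := by
        simpa only [Real.norm_eq_abs] using
          norm_integral_le_integral_norm (μ := ν) (f := fun ω => K x ω * (b ω - a 0))
      refine le_trans (ENNReal.ofReal_le_ofReal h1) ?_
      rw [ofReal_integral_eq_lintegral_ofReal hInt.abs
        (Filter.Eventually.of_forall fun ω => abs_nonneg _)]
      refine le_of_eq (lintegral_congr fun ω => ?_)
      rw [abs_mul, ENNReal.ofReal_mul (abs_nonneg _)]
    -- comparison of the depth factor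
    have hR2 : m x ^ α * ((m v) ^ α)⁻¹ ≤ q ^ d := by
      have hg := hgrow x d
      rw [hd] at hg
      have h3 : (c₂ ^ d * m x) ^ α ≤ (m v) ^ α :=
        Real.rpow_le_rpow (mul_nonneg (pow_nonneg hc₂0.le _) (hmpos x).le) hg hα.le
      rw [Real.mul_rpow (pow_nonneg hc₂0.le _) (hmpos x).le, hpow_pow] at h3
      have h5 : m x ^ α * (c₂ ^ α) ^ d ≤ (m v) ^ α := by linarith
      have h6 : m x ^ α ≤ q ^ d * (m v) ^ α := by
        have h4 : ((c₂ ^ α) ^ d : ℝ) ≠ 0 := (pow_pos (lt_trans one_pos hc₂α) d).ne'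
        calc m x ^ α = (m x ^ α * (c₂ ^ α) ^ d) * ((c₂ ^ α) ^ d)⁻¹ := by
              field_simp
          _ ≤ (m v) ^ α * ((c₂ ^ α) ^ d)⁻¹ :=
              mul_le_mul_of_nonneg_right h5 (inv_nonneg.2 (pow_nonneg (Real.rpow_nonneg hc₂0.le α) d))
          _ = q ^ d * (m v) ^ α := by rw [hq_def, inv_pow]; ring
      calc m x ^ α * ((m v) ^ α)⁻¹ ≤ (q ^ d * (m v) ^ α) * ((m v) ^ α)⁻¹ :=
            mul_le_mul_of_nonneg_right h6 (inv_nonneg.2 (Real.rpow_nonneg (hmpos v).le α))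
        _ = q ^ d := by
            have h7 : (m v) ^ α ≠ 0 := (Real.rpow_pos_of_pos (hmpos v) α).ne'
            field_simp
    calc ENNReal.ofReal (|∫ ω, K x ω * b ω ∂ν| * m x)
        = ENNReal.ofReal |∫ ω, K x ω * (b ω - a 0) ∂ν| * ENNReal.ofReal (m x) := by
          rw [ENNReal.ofReal_mul (abs_nonneg _), hsplit]
      _ ≤ (∫⁻ ω, Ψ x ω ∂ν) * ENNReal.ofReal (m x) := mul_le_mul_left habs _
      _ = ((∫⁻ ω in Se v, Ψ x ω ∂ν) + ∫⁻ ω in (Se v)ᶜ, Ψ x ω ∂ν) * ENNReal.ofReal (m x) := by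
          rw [lintegral_add_compl (fun ω => Ψ x ω) (hmeasS v)]
      _ = ENNReal.ofReal (m x) * (∫⁻ ω in Se v, Ψ x ω ∂ν)
            + (∫⁻ ω in (Se v)ᶜ, Ψ x ω ∂ν) * ENNReal.ofReal (m x) := by ring
      _ ≤ ENNReal.ofReal (m x) * (∫⁻ ω in Se v, Ψ x ω ∂ν)
            + ENNReal.ofReal (B * S₁ * q ^ d * m x) := by
          refine add_le_add le_rfl ?_
          calc (∫⁻ ω in (Se v)ᶜ, Ψ x ω ∂ν) * ENNReal.ofReal (m x)
              ≤ ENNReal.ofReal (B * (m x ^ α * ((m v) ^ α)⁻¹) * S₁) * ENNReal.ofReal (m x) :=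
                mul_le_mul_left (hI2 x d hd) _
            _ = ENNReal.ofReal (B * (m x ^ α * ((m v) ^ α)⁻¹) * S₁ * m x) := by
                rw [← ENNReal.ofReal_mul (mul_nonneg (mul_nonneg hB
                  (mul_nonneg (Real.rpow_nonneg (hmpos x).le α)
                    (inv_nonneg.2 (Real.rpow_nonneg (hmpos v).le α)))) hS₁nn)]
            _ ≤ ENNReal.ofReal (B * S₁ * q ^ d * m x) := by
                apply ENNReal.ofReal_le_ofReal
                have h8 : (0:ℝ) ≤ B * S₁ * m x :=
                  mul_nonneg (mul_nonneg hB hS₁nn) (hmpos x).le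
                calc B * (m x ^ α * ((m v) ^ α)⁻¹) * S₁ * m x
                    = (B * S₁ * m x) * (m x ^ α * ((m v) ^ α)⁻¹) := by ring
                  _ ≤ (B * S₁ * m x) * q ^ d := mul_le_mul_of_nonneg_left hR2 h8
                  _ = B * S₁ * q ^ d * m x := by ring
  -- choose a depth for every element of the tree sector
  have hdepex : ∀ x : ↥(tsector par v), ∃ n : ℕ, par^[n] x.1 = v := fun x => x.2
  set dep : ↥(tsector par v) → ℕ := fun x => (hdepex x).choose with hdep_def
  have hdep : ∀ x : ↥(tsector par v), par^[dep x] x.1 = v := fun x => (hdepex x).choose_spec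
  haveI : Countable ↥(tsector par v) := htscnt.to_subtype
  -- Part 1 : the local contribution
  have hPart1 : ∑' x : ↥(tsector par v),
      ENNReal.ofReal (m x.1) * (∫⁻ ω in Se v, Ψ x.1 ω ∂ν)
        ≤ ENNReal.ofReal (CK * (B * m v)) := by
    have hmeasψ : ∀ x : ↥(tsector par v),
        AEMeasurable (fun ω => ENNReal.ofReal (m x.1) * Ψ x.1 ω) (ν.restrict (Se v)) := by
      intro x
      have hK' : AEMeasurable (K x.1) ν := (hA1 x.1).1.aestronglyMeasurable.aemeasurable
      have hb' : AEMeasurable b ν := hbm.aemeasurable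
      have h1 : AEMeasurable (fun ω => ENNReal.ofReal |K x.1 ω|) ν :=
        ENNReal.measurable_ofReal.comp_aemeasurable (measurable_abs.comp_aemeasurable hK')
      have h2 : AEMeasurable (fun ω => ENNReal.ofReal |b ω - a 0|) ν :=
        ENNReal.measurable_ofReal.comp_aemeasurable
          (measurable_abs.comp_aemeasurable (hb'.sub aemeasurable_const))
      exact ((h1.mul h2).const_mul _).restrict
    calc ∑' x : ↥(tsector par v), ENNReal.ofReal (m x.1) * (∫⁻ ω in Se v, Ψ x.1 ω ∂ν)
        = ∑' x : ↥(tsector par v), ∫⁻ ω in Se v, ENNReal.ofReal (m x.1) * Ψ x.1 ω ∂ν :=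
          tsum_congr fun x => (lintegral_const_mul' _ _ ENNReal.ofReal_ne_top).symm
      _ = ∫⁻ ω in Se v, ∑' x : ↥(tsector par v), ENNReal.ofReal (m x.1) * Ψ x.1 ω ∂ν :=
          (lintegral_tsum hmeasψ).symm
      _ ≤ ∫⁻ ω in Se v, ENNReal.ofReal CK * ENNReal.ofReal |b ω - a 0| ∂ν := by
          apply lintegral_mono_ae
          have hA2' : ∀ᵐ ω ∂(ν.restrict (Se v)),
              (∑' y : T, ENNReal.ofReal (|K y ω| * m y)) ≤ ENNReal.ofReal CK :=
            ae_restrict_of_ae hA2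
          filter_upwards [hA2'] with ω hω
          have h1 : ∑' x : ↥(tsector par v),
              ENNReal.ofReal (m x.1) * ENNReal.ofReal |K x.1 ω| ≤ ENNReal.ofReal CK := by
            calc ∑' x : ↥(tsector par v),
                ENNReal.ofReal (m x.1) * ENNReal.ofReal |K x.1 ω|
                = ∑' x : ↥(tsector par v), ENNReal.ofReal (|K x.1 ω| * m x.1) :=
                  tsum_congr fun x => by
                    rw [← ENNReal.ofReal_mul (hmpos x.1).le, mul_comm]
              _ ≤ ∑' y : T, ENNReal.ofReal (|K y ω| * m y) :=
                  ENNReal.tsum_comp_le_tsum_of_injective Subtype.val_injective _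
              _ ≤ ENNReal.ofReal CK := hω
          calc ∑' x : ↥(tsector par v), ENNReal.ofReal (m x.1) * Ψ x.1 ω
              = (∑' x : ↥(tsector par v),
                  ENNReal.ofReal (m x.1) * ENNReal.ofReal |K x.1 ω|) * ENNReal.ofReal |b ω - a 0| := by
                rw [← ENNReal.tsum_mul_right]
                exact tsum_congr fun x => (mul_assoc _ _ _).symm
            _ ≤ ENNReal.ofReal CK * ENNReal.ofReal |b ω - a 0| := mul_le_mul_left h1 _
      _ = ENNReal.ofReal CK * ∫⁻ ω in Se v, ENNReal.ofReal |b ω - a 0| ∂ν :=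
          lintegral_const_mul' _ _ ENNReal.ofReal_ne_top
      _ ≤ ENNReal.ofReal CK * ENNReal.ofReal (B * m v) := mul_le_mul_right hosc0 _
      _ = ENNReal.ofReal (CK * (B * m v)) := (ENNReal.ofReal_mul hCK).symm
  -- Part 2 : the global contribution
  have hPart2 : ∑' x : ↥(tsector par v),
      ENNReal.ofReal (B * S₁ * q ^ (dep x) * m x.1)
        ≤ ENNReal.ofReal (B * S₁ * S₂ * m v) := by
    set g : (Σ d : ℕ, ↥(D d)) → ℝ≥0∞ :=
      fun p => ENNReal.ofReal (B * S₁ * q ^ p.1) * ν (Se p.2.1) with hg_def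
    have hι_inj : Function.Injective
        (fun x : ↥(tsector par v) =>
          (⟨dep x, ⟨x.1, hdep x⟩⟩ : Σ d : ℕ, (D d : Set T))) := by
      intro x y hxy
      exact Subtype.ext (congrArg (fun p : (Σ d : ℕ, ↥(D d)) => p.2.1) hxy)
    calc ∑' x : ↥(tsector par v), ENNReal.ofReal (B * S₁ * q ^ (dep x) * m x.1)
        = ∑' x : ↥(tsector par v), g ⟨dep x, ⟨x.1, hdep x⟩⟩ := by
          refine tsum_congr fun x => ?_
          simp only [hg_def]
          rw [← hofm x.1, ← ENNReal.ofReal_mul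
            (mul_nonneg (mul_nonneg hB hS₁nn) (pow_nonneg hq0.le _))]
      _ ≤ ∑' p : (Σ d : ℕ, ↥(D d)), g p :=
          ENNReal.tsum_comp_le_tsum_of_injective hι_inj g
      _ = ∑' d : ℕ, ∑' y : ↥(D d), ENNReal.ofReal (B * S₁ * q ^ d) * ν (Se y.1) :=
          ENNReal.tsum_sigma' g
      _ = ∑' d : ℕ, ENNReal.ofReal (B * S₁ * q ^ d) * ∑' y : ↥(D d), ν (Se y.1) :=
          tsum_congr fun d => ENNReal.tsum_mul_left
      _ ≤ ∑' d : ℕ, ENNReal.ofReal (B * S₁ * q ^ d) * ν (Se v) :=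
          ENNReal.tsum_le_tsum fun d => mul_le_mul_right (hflowsum d) _
      _ = ∑' d : ℕ, ENNReal.ofReal (B * S₁ * m v * q ^ d) := by
          refine tsum_congr fun d => ?_
          rw [← hofm v, ← ENNReal.ofReal_mul
            (mul_nonneg (mul_nonneg hB hS₁nn) (pow_nonneg hq0.le _))]
          congr 1
          ring
      _ = ENNReal.ofReal (∑' d : ℕ, B * S₁ * m v * q ^ d) := by
          rw [ENNReal.ofReal_tsum_of_nonneg
            (fun d => mul_nonneg (mul_nonneg (mul_nonneg hB hS₁nn) (hmpos v).le)
              (pow_nonneg hq0.le _))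
            ((summable_geometric_of_lt_one hq0.le hq1).mul_left _)]
      _ = ENNReal.ofReal (B * S₁ * S₂ * m v) := by
          rw [tsum_mul_left, hS₂_def, tsum_geometric_of_lt_one hq0.le hq1]
          congr 1
          ring
  -- final assembly
  calc ∑' x : ↥(tsector par v), ENNReal.ofReal (|∫ ω, K x.1 ω * b ω ∂ν| * m x.1)
      ≤ ∑' x : ↥(tsector par v),
          (ENNReal.ofReal (m x.1) * (∫⁻ ω in Se v, Ψ x.1 ω ∂ν)
            + ENNReal.ofReal (B * S₁ * q ^ (dep x) * m x.1)) :=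
        ENNReal.tsum_le_tsum fun x => hKey x.1 (dep x) (hdep x)
    _ = (∑' x : ↥(tsector par v),
          ENNReal.ofReal (m x.1) * (∫⁻ ω in Se v, Ψ x.1 ω ∂ν))
        + ∑' x : ↥(tsector par v), ENNReal.ofReal (B * S₁ * q ^ (dep x) * m x.1) :=
        ENNReal.tsum_add
    _ ≤ ENNReal.ofReal (CK * (B * m v)) + ENNReal.ofReal (B * S₁ * S₂ * m v) :=
        add_le_add hPart1 hPart2
    _ = ENNReal.ofReal (CK * (B * m v) + B * S₁ * S₂ * m v) := by
        rw [ENNReal.ofReal_add (mul_nonneg hCK (mul_nonneg hB (hmpos v).le))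
          (mul_nonneg (mul_nonneg (mul_nonneg hB hS₁nn) hS₂pos.le) (hmpos v).le)]
    _ ≤ ENNReal.ofReal ((CK + S₁ * S₂ + 1) * B * m v) := by
        apply ENNReal.ofReal_le_ofReal
        have h9 : (0:ℝ) ≤ B * m v := mul_nonneg hB (hmpos v).le
        nlinarith [h9]
end

section
/- Assume every x ∈ T has at least two successors and that there exist c₁, c₂ > 1 with c₂ m_ν(y) ≤ m_ν(x) ≤ c₁ m_ν(y) for all x ∈ T and y ∈ s(x). Let b : ∂T → ℝ be integrable on every sector and let A ≥ 0. Suppose that for every y ∈ T and every function a : ∂T → ℝ supported in ∂T_y with ∫_{∂T} a dν = 0 and ‖a‖_∞ ≤ 1/m_ν(y), one has |∫_{∂T} a b dν| ≤ A. Then b ∈ BMO with ‖b‖_{BMO} ≤ 2A. -/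
open MeasureTheory
open scoped ENNReal NNReal

lemma stmt19_measurable_sign : Measurable Real.sign := by
  unfold Real.sign
  refine Measurable.ite (measurableSet_lt measurable_id measurable_const) measurable_const ?_
  exact Measurable.ite (measurableSet_lt measurable_const measurable_id) measurable_const
    measurable_const

lemma stmt19_sign_mul (t : ℝ) : Real.sign t * t = |t| := by
  rcases lt_trichotomy t 0 with ht | ht | ht
  · rw [Real.sign_of_neg ht, abs_of_neg ht]; ring
  · simp [ht]
  · rw [Real.sign_of_pos ht, abs_of_pos ht]; ring

lemma stmt19_abs_sign_le (t : ℝ) : |Real.sign t| ≤ 1 := by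
  rcases lt_trichotomy t 0 with ht | ht | ht
  · rw [Real.sign_of_neg ht]; norm_num
  · simp [ht]
  · rw [Real.sign_of_pos ht]; norm_num

/-- Assume every vertex has at least two successors and
`c₂ m_ν(y) ≤ m_ν(x) ≤ c₁ m_ν(y)` for `y ∈ s(x)`. If `b` is locally integrable and
`|∫ a b dν| ≤ A` for every `a` supported in a sector `∂T_y`, with zero average and
`‖a‖_∞ ≤ 1/m_ν(y)`, then `b ∈ BMO` with `‖b‖_{BMO} ≤ 2A`. -/
theorem stmt19 {T : Type*} [Nonempty T] (par : T → T) (lev : T → ℤ)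
    (hlev : ∀ x : T, lev (par x) = lev x + 1)
    (hfin : ∀ x : T, {y : T | par y = x}.Finite)
    (htwo : ∀ x : T, ∃ y z : T, y ≠ z ∧ par y = x ∧ par z = x)
    (hconn : ∀ x y : T, ∃ n m : ℕ, par^[n] x = par^[m] y)
    (ν : Measure (PBoundary par lev))
    (hν : ∀ x : T, 0 < ν (sector par lev x) ∧ ν (sector par lev x) < ⊤)
    (c₁ c₂ : ℝ) (hc₁ : 1 < c₁) (hc₂ : 1 < c₂)
    (hdoub : ∀ x y : T, par y = x →
      c₂ * mnu par lev ν y ≤ mnu par lev ν x ∧ mnu par lev ν x ≤ c₁ * mnu par lev ν y)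
    (b : PBoundary par lev → ℝ)
    (hb : ∀ x : T, IntegrableOn b (sector par lev x) ν)
    (A : ℝ) (hA : 0 ≤ A)
    (h : ∀ (y : T) (a : PBoundary par lev → ℝ),
      Integrable a ν →
      (∀ ω : PBoundary par lev, ω ∉ sector par lev y → a ω = 0) →
      (∫ ω, a ω ∂ν) = 0 →
      (∀ ω : PBoundary par lev, |a ω| ≤ (mnu par lev ν y)⁻¹) →
      |∫ ω, a ω * b ω ∂ν| ≤ A) :
    ∀ x : T,
      (mnu par lev ν x)⁻¹ *
          ∫ ω in sector par lev x,
            |b ω - (mnu par lev ν x)⁻¹ * ∫ ξ in sector par lev x, b ξ ∂ν| ∂ν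
        ≤ 2 * A := by
  intro x
  set S := sector par lev x with hSdef
  have hSm : MeasurableSet S :=
    MeasurableSpace.measurableSet_generateFrom ⟨x, rfl⟩
  have hνS := hν x
  set m := mnu par lev ν x with hmdef
  have hm : 0 < m := ENNReal.toReal_pos hνS.1.ne' hνS.2.ne
  have hSfin : IsFiniteMeasure (ν.restrict S) :=
    ⟨by rw [Measure.restrict_apply_univ]; exact hνS.2⟩
  set c := m⁻¹ * ∫ ξ in S, b ξ ∂ν with hcdef
  have hbS : IntegrableOn b S ν := hb x
  set g : PBoundary par lev → ℝ := fun ω => Real.sign (b ω - c) with hgdef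
  have hgbound : ∀ ω, |g ω| ≤ 1 := fun ω => stmt19_abs_sign_le _
  have hgSM : AEStronglyMeasurable g (ν.restrict S) := by
    have hb' : AEMeasurable (fun ω => b ω - c) (ν.restrict S) :=
      (hbS.aemeasurable).sub aemeasurable_const
    exact (stmt19_measurable_sign.comp_aemeasurable hb').aestronglyMeasurable
  have hgInt : IntegrableOn g S ν := by
    refine Integrable.mono' (integrable_const 1) hgSM ?_
    exact Filter.Eventually.of_forall fun ω => by simpa using hgbound ω
  set I := ∫ ω in S, g ω ∂ν with hIdef
  set d := m⁻¹ * I with hddef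
  have hIbound : |I| ≤ m := by
    calc |I| ≤ ∫ ω in S, |g ω| ∂ν := by
          simpa [Real.norm_eq_abs] using norm_integral_le_integral_norm (μ := ν.restrict S) g
    _ ≤ ∫ _ω in S, (1 : ℝ) ∂ν := integral_mono hgInt.abs (integrable_const 1)
          fun ω => hgbound ω
    _ = m := by
          rw [integral_const]
          simp [Measure.restrict_apply_univ, hmdef, mnu, hSdef, smul_eq_mul]
          rfl
  have hdbound : |d| ≤ 1 := by
    rw [hddef, abs_mul, abs_of_nonneg (inv_nonneg.mpr hm.le)]
    calc m⁻¹ * |I| ≤ m⁻¹ * m := by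
          exact mul_le_mul_of_nonneg_left hIbound (inv_nonneg.mpr hm.le)
    _ = 1 := inv_mul_cancel₀ hm.ne'
  have hgdInt : IntegrableOn (fun ω => g ω - d) S ν := hgInt.sub (integrable_const d)
  set a : PBoundary par lev → ℝ :=
    S.indicator (fun ω => (2 * m)⁻¹ * (g ω - d)) with hadef
  have haInt : Integrable a ν := by
    rw [hadef, integrable_indicator_iff hSm]
    exact hgdInt.const_mul _
  have hasupp : ∀ ω, ω ∉ S → a ω = 0 := fun ω hω => Set.indicator_of_notMem hω _
  have hνSm : (ν S).toReal = m := rfl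
  have haint0 : (∫ ω, a ω ∂ν) = 0 := by
    rw [hadef, integral_indicator hSm, integral_const_mul,
      integral_sub hgInt (integrable_const d), integral_const,
      measureReal_restrict_apply_univ, smul_eq_mul, measureReal_def, hνSm, hddef]
    field_simp
    simp [hIdef]
  have habound : ∀ ω, |a ω| ≤ m⁻¹ := by
    intro ω
    by_cases hω : ω ∈ S
    · rw [hadef, Set.indicator_of_mem hω, abs_mul,
        abs_of_nonneg (inv_nonneg.mpr (by positivity : (0:ℝ) ≤ 2 * m))]
      have h2 : |g ω - d| ≤ 2 := by
        calc |g ω - d| ≤ |g ω| + |d| := abs_sub _ _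
        _ ≤ 1 + 1 := add_le_add (hgbound ω) hdbound
        _ = 2 := by norm_num
      calc (2 * m)⁻¹ * |g ω - d| ≤ (2 * m)⁻¹ * 2 := by
            exact mul_le_mul_of_nonneg_left h2 (by positivity)
      _ = m⁻¹ := by field_simp
    · rw [hadef, Set.indicator_of_notMem hω]
      simpa using inv_nonneg.mpr hm.le
  have hkey := h x a haInt hasupp haint0 habound
  -- compute the pairing integral
  have hgbInt : IntegrableOn (fun ω => g ω * b ω) S ν := by
    refine Integrable.bdd_mul (c := 1) hbS hgSM (Filter.Eventually.of_forall fun ω => by simpa using hgbound ω)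
  have hSb : ∫ ξ in S, b ξ ∂ν = m * c := by
    rw [hcdef]; field_simp
  have hprod : (∫ ω, a ω * b ω ∂ν) = (2 * m)⁻¹ * ∫ ω in S, |b ω - c| ∂ν := by
    have h1 : (fun ω => a ω * b ω) =
        S.indicator (fun ω => (2 * m)⁻¹ * ((g ω - d) * b ω)) := by
      funext ω
      by_cases hω : ω ∈ S
      · rw [hadef, Set.indicator_of_mem hω, Set.indicator_of_mem hω]; ring
      · rw [hadef, Set.indicator_of_notMem hω, Set.indicator_of_notMem hω, zero_mul]
    rw [h1, integral_indicator hSm, integral_const_mul]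
    congr 1
    have h2 : ∫ ω in S, (g ω - d) * b ω ∂ν
        = (∫ ω in S, g ω * b ω ∂ν) - d * ∫ ω in S, b ω ∂ν := by
      simp only [sub_mul]
      rw [integral_sub hgbInt (hbS.const_mul d), integral_const_mul]
    rw [h2]
    have h3 : ∫ ω in S, |b ω - c| ∂ν
        = (∫ ω in S, g ω * b ω ∂ν) - c * I := by
      have h4 : ∀ ω, |b ω - c| = g ω * b ω - c * g ω := by
        intro ω
        rw [← stmt19_sign_mul (b ω - c)]
        simp only [hgdef]; ring
      simp only [h4]
      rw [integral_sub hgbInt (hgInt.const_mul c), integral_const_mul]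
    rw [h3, hSb, hddef]
    field_simp
  have hnn : 0 ≤ ∫ ω in S, |b ω - c| ∂ν :=
    integral_nonneg fun ω => abs_nonneg _
  rw [hprod, abs_of_nonneg (by positivity)] at hkey
  have h2m : (2 * m)⁻¹ = 2⁻¹ * m⁻¹ := by rw [mul_inv]
  calc m⁻¹ * ∫ ω in S, |b ω - c| ∂ν
      = 2 * ((2 * m)⁻¹ * ∫ ω in S, |b ω - c| ∂ν) := by rw [h2m]; ring
  _ ≤ 2 * A := by linarith
end
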